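/- Same setting as above (exponential volume growth, C₂ ≥ 0, w > 0), and additionally let c ∈ C(M) be a function with 0 ≤ c ≤ 1 that equals 1 on the ball B₁(x) (i.e., 1 − c vanishes on B₁(x)). Then there exists M₃ > 0 such that for all sufficiently small t > 0 and this x: ∫_M exp(C₂ d(x,y)) exp(−(w/t) d(x,y)) (1 − c(y)) dμ(y) ≤ M₃ e^{−w/t}. -/

import Mathlib

open MeasureTheory
open scoped ENNReal

lemma setLIntegral_le_of_forall_le' {α : Type*} [MeasurableSpace α] (μ : Measure α)
    (s : Set α) (f : α → ℝ≥0∞) (C : ℝ≥0∞) (h : ∀ y ∈ s, f y ≤ C) :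
    ∫⁻ y in s, f y ∂μ ≤ C * μ s := by
  rw [MeasureTheory.lintegral_def]
  refine iSup₂_le fun φ hφ => ?_
  have hnull : (μ.restrict s) (φ ⁻¹' Set.Ioi C) = 0 := by
    rw [Measure.restrict_apply (φ.measurableSet_preimage _)]
    convert measure_empty (μ := μ)
    ext y
    simp only [Set.mem_inter_iff, Set.mem_preimage, Set.mem_Ioi, Set.mem_empty_iff_false,
      iff_false, not_and]
    intro hlt hys
    exact absurd ((hφ y).trans (h y hys)) (not_le.mpr hlt)
  have hae : ⇑φ =ᵐ[μ.restrict s] ⇑(φ ⊓ SimpleFunc.const α C) := by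
    rw [Filter.EventuallyEq, ae_iff]
    refine measure_mono_null ?_ hnull
    intro y hy
    simp only [Set.mem_setOf_eq, SimpleFunc.coe_inf, Pi.inf_apply, SimpleFunc.coe_const,
      Function.const_apply] at hy
    simp only [Set.mem_preimage, Set.mem_Ioi]
    by_contra hle
    exact hy (min_eq_left (not_lt.mp hle)).symm
  calc φ.lintegral (μ.restrict s)
      = (φ ⊓ SimpleFunc.const α C).lintegral (μ.restrict s) := SimpleFunc.lintegral_congr hae
    _ ≤ (SimpleFunc.const α C).lintegral (μ.restrict s) :=
        SimpleFunc.lintegral_mono_fun inf_le_right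
    _ = C * μ s := by rw [SimpleFunc.const_lintegral, Measure.restrict_apply_univ]

/-- Same setting as the exponential-volume-growth estimate, with a cutoff `c`, `0 ≤ c ≤ 1`,
equal to `1` on the unit ball around `x`: the integral against `1 − c` is exponentially
small in `1/t`. -/
theorem stmt9 {M : Type*} [MeasurableSpace M] [PseudoMetricSpace M] (μ : Measure M)
    (M₁ C₄ : ℝ) (hM₁ : 0 < M₁) (hC₄ : 0 < C₄)
    (hvol : ∀ (x : M) (r : ℝ), 0 ≤ r →
      μ (Metric.closedBall x r) ≤ ENNReal.ofReal (M₁ * Real.exp (C₄ * r)))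
    (C₂ w : ℝ) (hC₂ : 0 ≤ C₂) (hw : 0 < w)
    (x : M) (c : M → ℝ) (hc01 : ∀ y, 0 ≤ c y ∧ c y ≤ 1)
    (hc1 : ∀ y ∈ Metric.ball x 1, c y = 1) :
    ∃ M₃ : ℝ, 0 < M₃ ∧ ∀ t : ℝ, 0 < t → 2 * (C₂ + C₄) < w / t →
      ∫⁻ y, ENNReal.ofReal
          (Real.exp (C₂ * dist x y) * Real.exp (-(w / t) * dist x y) * (1 - c y)) ∂μ
        ≤ ENNReal.ofReal (M₃ * Real.exp (-(w / t))) := by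
  set D : ℝ := C₂ + C₄ with hD
  have hD0 : 0 < D := by positivity
  have hρ1 : Real.exp (-D) < 1 := by
    rw [Real.exp_lt_one_iff]; linarith
  have h1ρ : 0 < 1 - Real.exp (-D) := by linarith
  refine ⟨M₁ * Real.exp (3 * D) / (1 - Real.exp (-D)),
    div_pos (by positivity) h1ρ, ?_⟩
  intro t ht hst
  have hs0 : 0 < w / t := lt_of_le_of_lt (by linarith) hst
  -- annuli
  set A : ℕ → Set M := fun n => Metric.ball x (n + 1) \ Metric.ball x n with hA
  have hcover : (Set.univ : Set M) = ⋃ n : ℕ, A n := by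
    ext y
    simp only [Set.mem_univ, true_iff, Set.mem_iUnion, hA, Set.mem_diff]
    refine ⟨⌊dist y x⌋₊, Metric.mem_ball.mpr ?_, fun hmem => ?_⟩
    · exact_mod_cast Nat.lt_floor_add_one (dist y x)
    · exact absurd (Metric.mem_ball.mp hmem) (not_lt.mpr (Nat.floor_le dist_nonneg))
  have key : ∀ n : ℕ, ∫⁻ y in A n,
      ENNReal.ofReal
        (Real.exp (C₂ * dist x y) * Real.exp (-(w / t) * dist x y) * (1 - c y)) ∂μ
      ≤ ENNReal.ofReal (M₁ * Real.exp (3 * D) * Real.exp (-(w / t)))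
          * ENNReal.ofReal (Real.exp (-D)) ^ n := by
    intro n
    match n with
    | 0 =>
      have h0 : ∫⁻ y in A 0,
          ENNReal.ofReal
            (Real.exp (C₂ * dist x y) * Real.exp (-(w / t) * dist x y) * (1 - c y)) ∂μ
          ≤ 0 * μ (A 0) := by
        refine setLIntegral_le_of_forall_le' μ _ _ 0 fun y hy => ?_
        have hy1 : y ∈ Metric.ball x 1 := by
          have := hy.1
          simpa using this
        rw [hc1 y hy1]
        simp
      refine le_trans h0 ?_
      rw [zero_mul]
      positivity
    | Nat.succ m =>
      set n : ℕ := m + 1 with hn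
      have hstep : ∫⁻ y in A n,
          ENNReal.ofReal
            (Real.exp (C₂ * dist x y) * Real.exp (-(w / t) * dist x y) * (1 - c y)) ∂μ
          ≤ ENNReal.ofReal (Real.exp (C₂ * (n + 1)) * Real.exp (-(w / t) * n)) * μ (A n) := by
        refine setLIntegral_le_of_forall_le' μ _ _ _ fun y hy => ?_
        obtain ⟨hy1, hy2⟩ := hy
        have hdlt : dist x y < n + 1 := by
          rw [dist_comm]; exact Metric.mem_ball.mp hy1
        have hdge : (n : ℝ) ≤ dist x y := by
          rw [dist_comm]; exact not_lt.mp (fun h => hy2 (Metric.mem_ball.mpr h))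
        refine ENNReal.ofReal_le_ofReal ?_
        have h1 : Real.exp (C₂ * dist x y) ≤ Real.exp (C₂ * (n + 1)) :=
          Real.exp_le_exp.mpr (mul_le_mul_of_nonneg_left hdlt.le hC₂)
        have h2 : Real.exp (-(w / t) * dist x y) ≤ Real.exp (-(w / t) * n) :=
          Real.exp_le_exp.mpr (by nlinarith)
        have h3 : 1 - c y ≤ 1 := by have := (hc01 y).1; linarith
        have h3' : 0 ≤ 1 - c y := by have := (hc01 y).2; linarith
        calc Real.exp (C₂ * dist x y) * Real.exp (-(w / t) * dist x y) * (1 - c y)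
            ≤ Real.exp (C₂ * (n + 1)) * Real.exp (-(w / t) * n) * 1 := by
              refine mul_le_mul (mul_le_mul h1 h2 (Real.exp_pos _).le (Real.exp_pos _).le)
                h3 h3' (by positivity)
          _ = Real.exp (C₂ * (n + 1)) * Real.exp (-(w / t) * n) := mul_one _
      have hmeas : μ (A n) ≤ ENNReal.ofReal (M₁ * Real.exp (C₄ * (n + 1))) := by
        refine le_trans (measure_mono ?_) (hvol x (n + 1) (by positivity))
        exact Set.diff_subset.trans (Metric.ball_subset_closedBall)
      refine hstep.trans ?_
      refine le_trans (mul_le_mul' le_rfl hmeas) ?_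
      rw [← ENNReal.ofReal_mul (by positivity), ← ENNReal.ofReal_pow (Real.exp_pos _).le,
        ← ENNReal.ofReal_mul (by positivity)]
      refine ENNReal.ofReal_le_ofReal ?_
      have hexp : Real.exp (-D) ^ n = Real.exp ((n : ℝ) * -D) := by
        rw [Real.exp_nat_mul]
      rw [hexp]
      have lhs_eq : Real.exp (C₂ * (n + 1)) * Real.exp (-(w / t) * n)
            * (M₁ * Real.exp (C₄ * (n + 1)))
          = M₁ * Real.exp (C₂ * (n + 1) + -(w / t) * n + C₄ * (n + 1)) := by
        rw [Real.exp_add, Real.exp_add]; ring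
      have rhs_eq : M₁ * Real.exp (3 * D) * Real.exp (-(w / t)) * Real.exp ((n : ℝ) * -D)
          = M₁ * Real.exp (3 * D + -(w / t) + (n : ℝ) * -D) := by
        rw [Real.exp_add, Real.exp_add]; ring
      rw [lhs_eq, rhs_eq]
      refine mul_le_mul_of_nonneg_left (Real.exp_le_exp.mpr ?_) hM₁.le
      have hm0 : (0 : ℝ) ≤ (m : ℝ) := Nat.cast_nonneg m
      have hkey : 0 ≤ (w / t - 2 * D) * (m : ℝ) := mul_nonneg (by linarith) hm0
      have hcast : (n : ℝ) = (m : ℝ) + 1 := by push_cast [hn]; ring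
      rw [hcast] at *
      simp only [hD] at *
      nlinarith
  calc ∫⁻ y, ENNReal.ofReal
        (Real.exp (C₂ * dist x y) * Real.exp (-(w / t) * dist x y) * (1 - c y)) ∂μ
      = ∫⁻ y in ⋃ n : ℕ, A n, ENNReal.ofReal
        (Real.exp (C₂ * dist x y) * Real.exp (-(w / t) * dist x y) * (1 - c y)) ∂μ := by
        rw [← hcover, Measure.restrict_univ]
    _ ≤ ∑' n : ℕ, ∫⁻ y in A n, ENNReal.ofReal
        (Real.exp (C₂ * dist x y) * Real.exp (-(w / t) * dist x y) * (1 - c y)) ∂μ :=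
        lintegral_iUnion_le _ _
    _ ≤ ∑' n : ℕ, ENNReal.ofReal (M₁ * Real.exp (3 * D) * Real.exp (-(w / t)))
          * ENNReal.ofReal (Real.exp (-D)) ^ n := ENNReal.tsum_le_tsum key
    _ = ENNReal.ofReal (M₁ * Real.exp (3 * D) * Real.exp (-(w / t)))
          * ∑' n : ℕ, ENNReal.ofReal (Real.exp (-D)) ^ n := ENNReal.tsum_mul_left
    _ = ENNReal.ofReal (M₁ * Real.exp (3 * D) * Real.exp (-(w / t)))
          * (1 - ENNReal.ofReal (Real.exp (-D)))⁻¹ := by rw [ENNReal.tsum_geometric]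
    _ = ENNReal.ofReal (M₁ * Real.exp (3 * D) / (1 - Real.exp (-D)) * Real.exp (-(w / t))) := by
        have h1 : (1 : ℝ≥0∞) - ENNReal.ofReal (Real.exp (-D))
            = ENNReal.ofReal (1 - Real.exp (-D)) := by
          rw [ENNReal.ofReal_sub _ (Real.exp_pos _).le, ENNReal.ofReal_one]
        rw [h1, ← ENNReal.ofReal_inv_of_pos h1ρ, ← ENNReal.ofReal_mul (by positivity)]
        congr 1
        field_simp
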